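/- With the setting of the leakage lemma (H = H_1 + H_2, H_2 zero on S and ≥ J on S^⊥, J > 2K, K = ‖H_1‖), let b be the second-smallest eigenvalue of the restriction of H to S and b' the second-smallest eigenvalue of H. Then b' ≥ b - K²/(J - 2K). -/

import Mathlib

/-- **Leakage lemma, second eigenvalue part.** With `H = H₁ + H₂`, `H₂` vanishing on `S`
and at least `J` on `Sᗮ`, `J > 2K`, `K = ‖H₁‖`: if `a` and `b` are the smallest and
second-smallest eigenvalues of the restriction of `H` to `S` (with ground state `ξ`),
and `b'` is the second-smallest eigenvalue of `H` (characterized via Courant–Fischer by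
a two-dimensional subspace on which the Rayleigh quotient is at most `b'`), then
`b' ≥ b - K²/(J - 2K)`. -/
theorem leakage_lemma_second_eigenvalue (n : ℕ)
    (H₁ H₂ : EuclideanSpace ℂ (Fin n) →L[ℂ] EuclideanSpace ℂ (Fin n))
    (hH₁ : IsSelfAdjoint H₁) (hH₂ : IsSelfAdjoint H₂)
    (S : Submodule ℂ (EuclideanSpace ℂ (Fin n)))
    (hS : ∀ x ∈ S, H₂ x = 0)
    (J K : ℝ) (hK : K = ‖H₁‖) (hJ : 2 * K < J)
    (hSperp : ∀ x ∈ Sᗮ, J * ‖x‖ ^ 2 ≤ (inner ℂ x (H₂ x) : ℂ).re)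
    (a b b' : ℝ) (ξ : EuclideanSpace ℂ (Fin n))
    (hξS : ξ ∈ S) (hξ : ‖ξ‖ = 1)
    (ha_min : ∀ x ∈ S, ‖x‖ = 1 → a ≤ (inner ℂ x ((H₁ + H₂) x) : ℂ).re)
    (hξa : (inner ℂ ξ ((H₁ + H₂) ξ) : ℂ).re = a)
    (hb_min : ∀ x ∈ S, (inner ℂ ξ x : ℂ) = 0 →
      b * ‖x‖ ^ 2 ≤ (inner ℂ x ((H₁ + H₂) x) : ℂ).re)
    (hb_mem : ∃ x ∈ S, (inner ℂ ξ x : ℂ) = 0 ∧ ‖x‖ = 1 ∧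
      (inner ℂ x ((H₁ + H₂) x) : ℂ).re = b)
    (hb'_mem : ∃ V : Submodule ℂ (EuclideanSpace ℂ (Fin n)),
      Module.finrank ℂ V = 2 ∧ ∀ x ∈ V, (inner ℂ x ((H₁ + H₂) x) : ℂ).re ≤ b' * ‖x‖ ^ 2)
    (hb'_min : ∀ V : Submodule ℂ (EuclideanSpace ℂ (Fin n)),
      Module.finrank ℂ V = 2 →
      ∃ x ∈ V, x ≠ 0 ∧ b' * ‖x‖ ^ 2 ≤ (inner ℂ x ((H₁ + H₂) x) : ℂ).re) :
    b - K ^ 2 / (J - 2 * K) ≤ b' := by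
  have hJ2 : (0:ℝ) < J - 2 * K := by linarith
  have hK0 : (0:ℝ) ≤ K := hK ▸ norm_nonneg _
  -- b ≤ K
  have hbK : b ≤ K := by
    obtain ⟨w, hwS, -, hw1, hwb⟩ := hb_mem
    have hH₂w : H₂ w = 0 := hS w hwS
    have h1 : (inner ℂ w ((H₁ + H₂) w) : ℂ) = inner ℂ w (H₁ w) := by
      simp [ContinuousLinearMap.add_apply, inner_add_right, hH₂w]
    have h2 : (inner ℂ w (H₁ w) : ℂ).re ≤ K := by
      calc (inner ℂ w (H₁ w) : ℂ).re ≤ ‖(inner ℂ w (H₁ w) : ℂ)‖ := Complex.re_le_norm _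
        _ ≤ ‖w‖ * ‖H₁ w‖ := norm_inner_le_norm _ _
        _ ≤ ‖w‖ * (‖H₁‖ * ‖w‖) := by
            exact mul_le_mul_of_nonneg_left (H₁.le_opNorm w) (norm_nonneg _)
        _ = K := by rw [hw1, hK]; ring
    rw [← hwb, h1]; exact h2
  obtain ⟨V, hV2, hVle⟩ := hb'_mem
  -- find nonzero x ∈ V orthogonal to ξ
  set g : V →ₗ[ℂ] ℂ := ((innerSL ℂ ξ).toLinearMap).domRestrict V with hg
  have hker : LinearMap.ker g ≠ ⊥ := by
    intro h
    have hinj : Function.Injective g := LinearMap.ker_eq_bot.mp h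
    have h1 := LinearMap.finrank_le_finrank_of_injective hinj
    rw [hV2, Module.finrank_self] at h1
    omega
  obtain ⟨v, hvker, hv0⟩ := Submodule.exists_mem_ne_zero_of_ne_bot hker
  set x : EuclideanSpace ℂ (Fin n) := (v : EuclideanSpace ℂ (Fin n)) with hxdef
  have hxV : x ∈ V := v.2
  have hx0 : x ≠ 0 := fun h => hv0 (Subtype.ext h)
  have hxξ : (inner ℂ ξ x : ℂ) = 0 := hvker
  -- orthogonal decomposition
  set y : EuclideanSpace ℂ (Fin n) := (S.orthogonalProjectionOnto x : EuclideanSpace ℂ (Fin n)) with hy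
  set z : EuclideanSpace ℂ (Fin n) := x - y with hz
  have hyS : y ∈ S := (S.orthogonalProjectionOnto x).2
  have hzperp : z ∈ Sᗮ := S.sub_starProjection_mem_orthogonal x
  have hxyz : x = y + z := by rw [hz]; abel
  have hyz : (inner ℂ y z : ℂ) = 0 := Submodule.inner_right_of_mem_orthogonal hyS hzperp
  have hξz : (inner ℂ ξ z : ℂ) = 0 := Submodule.inner_right_of_mem_orthogonal hξS hzperp
  have hξy : (inner ℂ ξ y : ℂ) = 0 := by
    have := hxξ
    rw [hxyz, inner_add_right, hξz, add_zero] at this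
    exact this
  have hnorm : ‖x‖ ^ 2 = ‖y‖ ^ 2 + ‖z‖ ^ 2 := by
    rw [hxyz, @norm_add_sq ℂ _ _ _ _ y z, hyz]
    simp
  have hsym1 : ∀ u w : EuclideanSpace ℂ (Fin n), (inner ℂ (H₁ u) w : ℂ) = inner ℂ u (H₁ w) :=
    fun u w => hH₁.isSymmetric u w
  have hsym2 : ∀ u w : EuclideanSpace ℂ (Fin n), (inner ℂ (H₂ u) w : ℂ) = inner ℂ u (H₂ w) :=
    fun u w => hH₂.isSymmetric u w
  -- expansion of the quadratic form
  have hexp : (inner ℂ x ((H₁ + H₂) x) : ℂ).re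
      = (inner ℂ y ((H₁ + H₂) y) : ℂ).re + 2 * (inner ℂ y (H₁ z) : ℂ).re
        + (inner ℂ z (H₁ z) : ℂ).re + (inner ℂ z (H₂ z) : ℂ).re := by
    have hH₂y : H₂ y = 0 := hS y hyS
    have h1 : (inner ℂ z (H₁ y) : ℂ) = starRingEnd ℂ (inner ℂ y (H₁ z)) := by
      rw [← hsym1 y z, ← inner_conj_symm]
    have : (inner ℂ x ((H₁ + H₂) x) : ℂ)
        = inner ℂ y ((H₁ + H₂) y) + inner ℂ y (H₁ z) + starRingEnd ℂ (inner ℂ y (H₁ z))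
          + inner ℂ z (H₁ z) + inner ℂ z (H₂ z) := by
      rw [hxyz]
      simp only [ContinuousLinearMap.add_apply, map_add, inner_add_left, inner_add_right,
        hH₂y, inner_zero_right]
      rw [← hsym2 y z, hH₂y, inner_zero_left, h1]
      ring
    rw [this]
    simp [Complex.add_re, Complex.conj_re]
    have hc : (inner ℂ (H₁ z) y : ℂ).re = (inner ℂ y (H₁ z) : ℂ).re := by
      rw [← inner_conj_symm, Complex.conj_re]
    rw [hc]
    ring
  -- the four estimates
  have est1 : b * ‖y‖ ^ 2 ≤ (inner ℂ y ((H₁ + H₂) y) : ℂ).re := hb_min y hyS hξy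
  have estK : ∀ u w : EuclideanSpace ℂ (Fin n), -(K * ‖u‖ * ‖w‖) ≤ (inner ℂ u (H₁ w) : ℂ).re := by
    intro u w
    have h1 : ‖(inner ℂ u (H₁ w) : ℂ)‖ ≤ K * ‖u‖ * ‖w‖ := by
      calc ‖(inner ℂ u (H₁ w) : ℂ)‖ ≤ ‖u‖ * ‖H₁ w‖ := norm_inner_le_norm _ _
        _ ≤ ‖u‖ * (‖H₁‖ * ‖w‖) := mul_le_mul_of_nonneg_left (H₁.le_opNorm w) (norm_nonneg _)
        _ = K * ‖u‖ * ‖w‖ := by rw [hK]; ring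
    have h2 := Complex.abs_re_le_norm (inner ℂ u (H₁ w) : ℂ)
    have h3 : |(inner ℂ u (H₁ w) : ℂ).re| ≤ K * ‖u‖ * ‖w‖ := le_trans h2 h1
    linarith [abs_le.mp h3]
  have est2 : -(K * ‖y‖ * ‖z‖) ≤ (inner ℂ y (H₁ z) : ℂ).re := estK y z
  have est3 : -(K * ‖z‖ * ‖z‖) ≤ (inner ℂ z (H₁ z) : ℂ).re := estK z z
  have est4 : J * ‖z‖ ^ 2 ≤ (inner ℂ z (H₂ z) : ℂ).re := hSperp z hzperp
  have hupper : (inner ℂ x ((H₁ + H₂) x) : ℂ).re ≤ b' * ‖x‖ ^ 2 := hVle x hxV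
  -- put everything together
  set s := ‖y‖ with hs
  set t := ‖z‖ with ht
  have hs0 : 0 ≤ s := norm_nonneg _
  have ht0 : 0 ≤ t := norm_nonneg _
  have hxpos : 0 < ‖x‖ ^ 2 := pow_pos (norm_pos_iff.mpr hx0) 2
  have hchain : b * s ^ 2 - 2 * (K * s * t) + (-(K * t * t) + J * t ^ 2) ≤ b' * (s ^ 2 + t ^ 2) := by
    rw [← hnorm]
    calc b * s ^ 2 - 2 * (K * s * t) + (-(K * t * t) + J * t ^ 2)
        ≤ (inner ℂ x ((H₁ + H₂) x) : ℂ).re := by rw [hexp]; linarith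
      _ ≤ b' * ‖x‖ ^ 2 := hupper
  have hε : K ^ 2 / (J - 2 * K) * (J - 2 * K) = K ^ 2 := div_mul_cancel₀ _ (ne_of_gt hJ2)
  rw [hnorm] at hxpos
  set ε := K ^ 2 / (J - 2 * K) with hεdef
  have h2 : (J - 2 * K) * (ε * s ^ 2 - 2 * K * s * t + (J - K - b + ε) * t ^ 2)
      = (K * s - (J - 2 * K) * t) ^ 2 + ((J - 2 * K) * (K - b) + K ^ 2) * t ^ 2 := by
    linear_combination (s ^ 2 + t ^ 2) * hε
  have h1 : (0:ℝ) ≤ (K * s - (J - 2 * K) * t) ^ 2 + ((J - 2 * K) * (K - b) + K ^ 2) * t ^ 2 :=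
    add_nonneg (sq_nonneg _)
      (mul_nonneg (add_nonneg (mul_nonneg hJ2.le (sub_nonneg.mpr hbK)) (sq_nonneg K)) (sq_nonneg t))
  have h0 : (0:ℝ) ≤ ε * s ^ 2 - 2 * K * s * t + (J - K - b + ε) * t ^ 2 := by
    have h3 : (J - 2 * K) * 0 ≤ (J - 2 * K)
        * (ε * s ^ 2 - 2 * K * s * t + (J - K - b + ε) * t ^ 2) := by
      rw [mul_zero, h2]; exact h1
    exact le_of_mul_le_mul_left (by simpa using h3) hJ2
  have key : (b - ε) * (s ^ 2 + t ^ 2) ≤ b' * (s ^ 2 + t ^ 2) := by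
    refine le_trans ?_ hchain
    linarith [h0]
  exact le_of_mul_le_mul_right (by linarith [key]) hxpos
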